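/- Efficiency of the Shapley value: for a cooperative game val : Finset(Fin n) → ℝ with val(∅) = 0, the sum over all players j of the Shapley value φ_j(val) = Σ_{S ⊆ {1..n}\{j}} |S|!(n−|S|−1)!/n! · (val(S ∪ {j}) − val(S)) equals val of the grand coalition {1,...,n}. -/

import Mathlib

open Finset

theorem shapley_efficiency (n : ℕ) (val : Finset (Fin n) → ℝ) (h0 : val ∅ = 0) :
    ∑ j : Fin n,
        ∑ S ∈ ((Finset.univ : Finset (Fin n)).erase j).powerset,
          ((S.card.factorial * (n - S.card - 1).factorial : ℝ) / (n.factorial : ℝ)) *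
            (val (insert j S) - val S) =
      val (Finset.univ : Finset (Fin n)) := by
  rcases Nat.eq_zero_or_pos n with hn | hn
  · subst hn
    simp [Finset.univ_eq_empty, h0]
  set c : ℕ → ℝ := fun k => (k.factorial * (n - k - 1).factorial : ℝ) / n.factorial with hc
  have key : ∀ j : Fin n,
      (∑ S ∈ ((Finset.univ : Finset (Fin n)).erase j).powerset,
        c S.card * (val (insert j S) - val S))
      = ∑ T ∈ (Finset.univ : Finset (Fin n)).powerset,
          ((if j ∈ T then c (T.card - 1) * val T else 0)
            - (if j ∉ T then c T.card * val T else 0)) := by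
    intro j
    have hins : insert j ((Finset.univ : Finset (Fin n)).erase j) = Finset.univ :=
      Finset.insert_erase (mem_univ j)
    have hP : ∑ T ∈ (Finset.univ : Finset (Fin n)).powerset,
        (if j ∈ T then c (T.card - 1) * val T else 0)
        = ∑ S ∈ ((Finset.univ : Finset (Fin n)).erase j).powerset,
            c S.card * val (insert j S) := by
      conv_lhs => rw [← hins, Finset.sum_powerset_insert (Finset.notMem_erase j _)]
      have h1 : ∑ T ∈ ((Finset.univ : Finset (Fin n)).erase j).powerset,
          (if j ∈ T then c (T.card - 1) * val T else 0) = 0 := by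
        apply Finset.sum_eq_zero
        intro T hT
        rw [Finset.mem_powerset] at hT
        have : j ∉ T := fun h => Finset.notMem_erase j _ (hT h)
        simp [this]
      rw [h1, zero_add]
      apply Finset.sum_congr rfl
      intro S hS
      rw [Finset.mem_powerset] at hS
      have hjS : j ∉ S := fun h => Finset.notMem_erase j _ (hS h)
      rw [if_pos (Finset.mem_insert_self j S), Finset.card_insert_of_notMem hjS,
        Nat.add_sub_cancel]
    have hQ : ∑ T ∈ (Finset.univ : Finset (Fin n)).powerset,
        (if j ∉ T then c T.card * val T else 0)
        = ∑ S ∈ ((Finset.univ : Finset (Fin n)).erase j).powerset,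
            c S.card * val S := by
      conv_lhs => rw [← hins, Finset.sum_powerset_insert (Finset.notMem_erase j _)]
      have h2 : ∑ T ∈ ((Finset.univ : Finset (Fin n)).erase j).powerset,
          (if j ∉ insert j T then c (insert j T).card * val (insert j T) else 0) = 0 := by
        apply Finset.sum_eq_zero
        intro T hT
        simp [Finset.mem_insert_self]
      rw [h2, add_zero]
      apply Finset.sum_congr rfl
      intro S hS
      rw [Finset.mem_powerset] at hS
      have hjS : j ∉ S := fun h => Finset.notMem_erase j _ (hS h)
      rw [if_pos hjS]
    simp_rw [mul_sub]
    rw [Finset.sum_sub_distrib, ← hP, ← hQ, ← Finset.sum_sub_distrib]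
  calc ∑ j : Fin n,
        ∑ S ∈ ((Finset.univ : Finset (Fin n)).erase j).powerset,
          ((S.card.factorial * (n - S.card - 1).factorial : ℝ) / (n.factorial : ℝ)) *
            (val (insert j S) - val S)
      = ∑ j : Fin n, ∑ T ∈ (Finset.univ : Finset (Fin n)).powerset,
          ((if j ∈ T then c (T.card - 1) * val T else 0)
            - (if j ∉ T then c T.card * val T else 0)) := by
        exact Finset.sum_congr rfl fun j _ => key j
    _ = ∑ T ∈ (Finset.univ : Finset (Fin n)).powerset, ∑ j : Fin n,
          ((if j ∈ T then c (T.card - 1) * val T else 0)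
            - (if j ∉ T then c T.card * val T else 0)) := Finset.sum_comm
    _ = ∑ T ∈ (Finset.univ : Finset (Fin n)).powerset,
          ((T.card : ℝ) * (c (T.card - 1) * val T)
            - ((n - T.card : ℕ) : ℝ) * (c T.card * val T)) := by
        apply Finset.sum_congr rfl
        intro T _
        rw [Finset.sum_sub_distrib]
        congr 1
        · rw [Finset.sum_ite_mem, Finset.univ_inter, Finset.sum_const, nsmul_eq_mul]
        · have : ∀ j : Fin n, (if j ∉ T then c T.card * val T else 0)
              = if j ∈ Tᶜ then c T.card * val T else 0 := by
            intro j; simp [Finset.mem_compl]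
          simp_rw [this]
          rw [Finset.sum_ite_mem, Finset.univ_inter, Finset.sum_const, nsmul_eq_mul,
            Finset.card_compl, Fintype.card_fin]
    _ = val (Finset.univ : Finset (Fin n)) := by
        rw [Finset.sum_eq_single (Finset.univ : Finset (Fin n))]
        · rw [Finset.card_univ, Fintype.card_fin, Nat.sub_self, Nat.cast_zero, zero_mul,
            sub_zero, hc]
          have : (n.factorial : ℝ) ≠ 0 := Nat.cast_ne_zero.mpr n.factorial_ne_zero
          have hfact : (n : ℝ) * ((n - 1).factorial * (n - (n - 1) - 1).factorial : ℝ)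
              = (n.factorial : ℝ) := by
            have h1 : n - (n - 1) - 1 = 0 := by omega
            rw [h1]
            simp only [Nat.factorial_zero, Nat.cast_one, mul_one]
            rw [← Nat.cast_mul, Nat.mul_factorial_pred hn.ne']
          field_simp
          rw [← hfact]; ring
        · intro T hT hTne
          rw [Finset.mem_powerset] at hT
          rcases Finset.eq_empty_or_nonempty T with rfl | hTn
          · simp [h0]
          · have hk1 : 1 ≤ T.card := Finset.card_pos.mpr hTn
            have hkn : T.card < n := by
              have := Finset.card_lt_card (lt_of_le_of_ne hT (by
                intro h; exact hTne h))
              simpa [Finset.card_univ] using this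
            have hcoeff : (T.card : ℝ) * c (T.card - 1) = ((n - T.card : ℕ) : ℝ) * c T.card := by
              rw [hc]
              have heq : T.card * ((T.card - 1).factorial * (n - (T.card - 1) - 1).factorial)
                  = (n - T.card) * (T.card.factorial * (n - T.card - 1).factorial) := by
                have h1 : n - (T.card - 1) - 1 = n - T.card := by omega
                rw [h1, ← mul_assoc, Nat.mul_factorial_pred (by omega : T.card ≠ 0), mul_comm (n - T.card),
                  mul_assoc]
                congr 1
                rw [mul_comm, Nat.mul_factorial_pred (by omega : n - T.card ≠ 0)]
              field_simp
              rw [← Nat.cast_mul, ← Nat.cast_mul, ← Nat.cast_mul, ← Nat.cast_mul]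
              exact_mod_cast congrArg (Nat.cast : ℕ → ℝ) (by simpa only [mul_assoc] using heq)
            rw [← mul_assoc, ← mul_assoc, hcoeff, sub_self]
        · intro h
          exact absurd (Finset.mem_powerset.mpr (le_refl _)) h
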